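/- Let m ≥ 1, let z, ζ ∈ ℂ, and suppose sup_{0≤k≤n≤m} ‖𝒯^z(n,k)‖ ≤ C and set D = sup_{0≤l≤m−1} 1/t(l). If C·D·|ζ|·m < 1, then sup_{0≤k≤n≤m} ‖𝒯^{z+ζ}(n,k)‖ ≤ C / (1 − C·D·|ζ|·m). -/

import Mathlib

open MeasureTheory Filter
open scoped BigOperators ENNReal

noncomputable section

/-- Single-site transfer matrix at complex energy. -/
def TstC (a : ℂ) (t : ℝ) : Matrix (Fin 2) (Fin 2) ℂ :=
  (1 / (t : ℂ)) • !![a, -(t : ℂ) ^ 2; 1, 0]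

/-- Site-wise transfer matrix `𝒯^z(n,k)` for Jacobi data `(t,v)`. -/
def TS (t v : ℤ → ℝ) (z : ℂ) (n k : ℤ) : Matrix (Fin 2) (Fin 2) ℂ :=
  ((List.range (n - k).toNat).map fun i => TstC ((v (n - 1 - i) : ℂ) - z) (t (n - 1 - i))).prod

/-- Euclidean operator norm of a complex 2×2 matrix. -/
def opNormC (A : Matrix (Fin 2) (Fin 2) ℂ) : ℝ := ‖Matrix.toEuclideanCLM (𝕜 := ℂ) A‖

/-- auxiliary: the rank-one perturbation matrix -/
def Emat : Matrix (Fin 2) (Fin 2) ℂ := !![1, 0; 0, 0]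

lemma opNormC_mul_le (A B : Matrix (Fin 2) (Fin 2) ℂ) :
    opNormC (A * B) ≤ opNormC A * opNormC B := by
  unfold opNormC; rw [map_mul]; exact norm_mul_le _ _

lemma opNormC_add_le (A B : Matrix (Fin 2) (Fin 2) ℂ) :
    opNormC (A + B) ≤ opNormC A + opNormC B := by
  unfold opNormC; rw [map_add]; exact norm_add_le _ _

lemma opNormC_sum_le {ι : Type*} (s : Finset ι) (f : ι → Matrix (Fin 2) (Fin 2) ℂ) :
    opNormC (∑ i ∈ s, f i) ≤ ∑ i ∈ s, opNormC (f i) := by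
  unfold opNormC; rw [map_sum]; exact norm_sum_le _ _

set_option synthInstance.maxHeartbeats 1000000 in
lemma opNormC_smul (c : ℂ) (A : Matrix (Fin 2) (Fin 2) ℂ) :
    opNormC (c • A) = ‖c‖ * opNormC A := by
  unfold opNormC
  rw [show Matrix.toEuclideanCLM (𝕜 := ℂ) (c • A) = c • Matrix.toEuclideanCLM (𝕜 := ℂ) A from
    map_smul (Matrix.toEuclideanCLM (𝕜 := ℂ) : Matrix (Fin 2) (Fin 2) ℂ ≃⋆ₐ[ℂ] _) c A]
  exact norm_smul c (Matrix.toEuclideanCLM (𝕜 := ℂ) A)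

lemma opNormC_nonneg (A : Matrix (Fin 2) (Fin 2) ℂ) : 0 ≤ opNormC A := norm_nonneg _

lemma opNormC_Emat_le_one : opNormC Emat ≤ 1 := by
  unfold opNormC
  set f := Matrix.toEuclideanCLM (𝕜 := ℂ) Emat with hf
  have hE2 : Emat * Emat = Emat := by
    ext i j
    fin_cases i <;> fin_cases j <;>
      simp [Emat, Matrix.mul_apply, Fin.sum_univ_two]
  have hEstar : star Emat = Emat := by
    ext i j
    fin_cases i <;> fin_cases j <;>
      simp [Emat, Matrix.star_apply]
  have h1 : f * f = f := by rw [hf, ← map_mul, hE2]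
  have h2 : star f = f := by rw [hf, ← map_star, hEstar]
  have h3 : ‖f‖ * ‖f‖ = ‖f‖ := by
    conv_rhs => rw [← h1]
    rw [← CStarRing.norm_star_mul_self (x := f), h2]
  nlinarith [norm_nonneg f]

lemma TS_self (t v : ℤ → ℝ) (z : ℂ) (k : ℤ) : TS t v z k k = 1 := by
  simp [TS]

lemma TS_eq (t v : ℤ → ℝ) (z : ℂ) (n k : ℤ) : TS t v z n k =
    ((List.range (n - k).toNat).map fun i : ℕ =>
      TstC ((v (n - 1 - (i : ℤ)) : ℂ) - z) (t (n - 1 - (i : ℤ)))).prod := by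
  rw [TS]
  simp only [bind_pure_comp, List.map_eq_map, List.map_map]
  rfl

lemma TS_succ_left (t v : ℤ → ℝ) (z : ℂ) (n k : ℤ) (h : k ≤ n) :
    TS t v z (n + 1) k = TstC ((v n : ℂ) - z) (t n) * TS t v z n k := by
  have h1 : (n + 1 - k).toNat = (n - k).toNat + 1 := by omega
  rw [TS_eq, TS_eq, h1, List.range_succ_eq_map, List.map_cons, List.prod_cons, List.map_map]
  congr 1
  · norm_num
  · refine congrArg List.prod (List.map_congr_left fun a _ => ?_)
    simp only [Function.comp_apply]
    congr 2 <;> push_cast <;> ring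

lemma TstC_split (a : ℂ) (s : ℝ) (z ζ : ℂ) :
    TstC (a - (z + ζ)) s = TstC (a - z) s + (-ζ / (s : ℂ)) • Emat := by
  ext i j
  fin_cases i <;> fin_cases j <;>
    simp [TstC, Emat, Matrix.smul_apply] <;> ring

lemma duhamel (t v : ℤ → ℝ) (z ζ : ℂ) (k : ℤ) :
    ∀ n : ℤ, k ≤ n →
      TS t v (z + ζ) n k = TS t v z n k +
        ∑ l ∈ Finset.Ico k n,
          TS t v z n (l + 1) * ((-ζ / (t l : ℂ)) • Emat) * TS t v (z + ζ) l k := by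
  refine Int.le_induction ?_ ?_
  · simp [TS_self]
  · intro n hn IH
    have hIco : Finset.Ico k (n + 1) = insert n (Finset.Ico k n) := by
      ext x; simp only [Finset.mem_Ico, Finset.mem_insert]; omega
    have hnotmem : n ∉ Finset.Ico k n := by simp
    have hsum : ∀ l ∈ Finset.Ico k n,
        TstC ((v n : ℂ) - z) (t n) *
          (TS t v z n (l + 1) * ((-ζ / (t l : ℂ)) • Emat) * TS t v (z + ζ) l k) =
        TS t v z (n + 1) (l + 1) * ((-ζ / (t l : ℂ)) • Emat) * TS t v (z + ζ) l k := by
      intro l hl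
      rw [Finset.mem_Ico] at hl
      rw [TS_succ_left t v z n (l + 1) (by omega)]
      simp only [mul_assoc]
    calc TS t v (z + ζ) (n + 1) k
        = (TstC ((v n : ℂ) - z) (t n) + (-ζ / (t n : ℂ)) • Emat) * TS t v (z + ζ) n k := by
          rw [TS_succ_left t v (z + ζ) n k hn, TstC_split]
      _ = TstC ((v n : ℂ) - z) (t n) * TS t v (z + ζ) n k +
            ((-ζ / (t n : ℂ)) • Emat) * TS t v (z + ζ) n k := add_mul _ _ _
      _ = TstC ((v n : ℂ) - z) (t n) *
            (TS t v z n k + ∑ l ∈ Finset.Ico k n,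
              TS t v z n (l + 1) * ((-ζ / (t l : ℂ)) • Emat) * TS t v (z + ζ) l k) +
            ((-ζ / (t n : ℂ)) • Emat) * TS t v (z + ζ) n k := by
          nth_rewrite 1 [IH]; rfl
      _ = TstC ((v n : ℂ) - z) (t n) * TS t v z n k +
            ∑ l ∈ Finset.Ico k n, TstC ((v n : ℂ) - z) (t n) *
              (TS t v z n (l + 1) * ((-ζ / (t l : ℂ)) • Emat) * TS t v (z + ζ) l k) +
            ((-ζ / (t n : ℂ)) • Emat) * TS t v (z + ζ) n k := by
          rw [mul_add, Finset.mul_sum]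
      _ = TS t v z (n + 1) k +
            ∑ l ∈ Finset.Ico k n,
              TS t v z (n + 1) (l + 1) * ((-ζ / (t l : ℂ)) • Emat) * TS t v (z + ζ) l k +
            TS t v z (n + 1) (n + 1) * ((-ζ / (t n : ℂ)) • Emat) * TS t v (z + ζ) n k := by
          rw [← TS_succ_left t v z n k hn, TS_self, one_mul, Finset.sum_congr rfl hsum]
      _ = TS t v z (n + 1) k +
            ∑ l ∈ Finset.Ico k (n + 1),
              TS t v z (n + 1) (l + 1) * ((-ζ / (t l : ℂ)) • Emat) * TS t v (z + ζ) l k := by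
          rw [hIco, Finset.sum_insert hnotmem]
          abel

/-- Perturbative bound on transfer matrices (Lemma 1 of the paper). -/
theorem stmt11 (t v : ℤ → ℝ) (ht : ∀ n, 0 < t n) (m : ℤ) (hm : 1 ≤ m) (z ζ : ℂ)
    (C D : ℝ)
    (hC : ∀ k n : ℤ, 0 ≤ k → k ≤ n → n ≤ m → opNormC (TS t v z n k) ≤ C)
    (hD : ∀ l : ℤ, 0 ≤ l → l ≤ m - 1 → 1 / t l ≤ D)
    (hsmall : C * D * ‖ζ‖ * (m : ℝ) < 1) :
    ∀ k n : ℤ, 0 ≤ k → k ≤ n → n ≤ m →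
      opNormC (TS t v (z + ζ) n k) ≤ C / (1 - C * D * ‖ζ‖ * (m : ℝ)) := by
  set q : ℝ := C * D * ‖ζ‖ * (m : ℝ) with hqdef
  set B : ℝ := C / (1 - q) with hBdef
  have h1q : 0 < 1 - q := by linarith
  have hC0 : 0 ≤ C := le_trans (opNormC_nonneg _) (hC 0 0 le_rfl le_rfl (by omega))
  have hD0 : 0 ≤ D := le_trans (one_div_pos.mpr (ht 0)).le (hD 0 le_rfl (by omega))
  have hm0 : (0:ℝ) ≤ (m:ℝ) := by exact_mod_cast (by omega : (0:ℤ) ≤ m)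
  have hq0 : 0 ≤ q :=
    mul_nonneg (mul_nonneg (mul_nonneg hC0 hD0) (norm_nonneg ζ)) hm0
  have hB0 : 0 ≤ B := div_nonneg hC0 h1q.le
  intro k n hk hkn hnm
  -- strong induction on the length n - k
  suffices H : ∀ j : ℕ, ∀ n : ℤ, n = k + j → n ≤ m → opNormC (TS t v (z + ζ) n k) ≤ B by
    exact H (n - k).toNat n (by omega) hnm
  intro j
  induction j using Nat.strong_induction_on with
  | _ j IH =>
    intro n hn hnm
    have hkn' : k ≤ n := by omega
    rw [duhamel t v z ζ k n hkn']
    -- bound each summand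
    have hterm : ∀ l ∈ Finset.Ico k n,
        opNormC (TS t v z n (l + 1) * ((-ζ / (t l : ℂ)) • Emat) * TS t v (z + ζ) l k)
          ≤ C * (D * ‖ζ‖) * B := by
      intro l hl
      rw [Finset.mem_Ico] at hl
      have h1 : opNormC (TS t v z n (l + 1)) ≤ C :=
        hC (l + 1) n (by omega) (by omega) hnm
      have h2 : opNormC ((-ζ / (t l : ℂ)) • Emat) ≤ D * ‖ζ‖ := by
        rw [opNormC_smul]
        have habs : ‖-ζ / (t l : ℂ)‖ = ‖ζ‖ * (1 / t l) := by
          rw [norm_div, norm_neg, Complex.norm_real, Real.norm_eq_abs, abs_of_pos (ht l)]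
          ring
        rw [habs]
        calc ‖ζ‖ * (1 / t l) * opNormC Emat
            ≤ ‖ζ‖ * (1 / t l) * 1 := by
              apply mul_le_mul_of_nonneg_left opNormC_Emat_le_one
              exact mul_nonneg (norm_nonneg ζ) (one_div_pos.mpr (ht l)).le
          _ = ‖ζ‖ * (1 / t l) := by ring
          _ ≤ ‖ζ‖ * D := by
              apply mul_le_mul_of_nonneg_left _ (norm_nonneg ζ)
              exact hD l (by omega) (by omega)
          _ = D * ‖ζ‖ := by ring
      have h3 : opNormC (TS t v (z + ζ) l k) ≤ B :=
        IH (l - k).toNat (by omega) l (by omega) (by omega)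
      calc opNormC (TS t v z n (l + 1) * ((-ζ / (t l : ℂ)) • Emat) * TS t v (z + ζ) l k)
          ≤ opNormC (TS t v z n (l + 1) * ((-ζ / (t l : ℂ)) • Emat)) *
              opNormC (TS t v (z + ζ) l k) := opNormC_mul_le _ _
        _ ≤ opNormC (TS t v z n (l + 1)) * opNormC ((-ζ / (t l : ℂ)) • Emat) *
              opNormC (TS t v (z + ζ) l k) :=
            mul_le_mul_of_nonneg_right (opNormC_mul_le _ _) (opNormC_nonneg _)
        _ ≤ C * (D * ‖ζ‖) * B := by
            apply mul_le_mul (mul_le_mul h1 h2 (opNormC_nonneg _) hC0) h3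
              (opNormC_nonneg _)
            exact mul_nonneg hC0 (mul_nonneg hD0 (norm_nonneg ζ))
    have hcard : ((Finset.Ico k n).card : ℝ) ≤ (m : ℝ) := by
      rw [Int.card_Ico]
      have h : ((n - k).toNat : ℤ) ≤ m := by omega
      exact_mod_cast h
    have hCDB : 0 ≤ C * (D * ‖ζ‖) * B :=
      mul_nonneg (mul_nonneg hC0 (mul_nonneg hD0 (norm_nonneg ζ))) hB0
    calc opNormC (TS t v z n k +
          ∑ l ∈ Finset.Ico k n,
            TS t v z n (l + 1) * ((-ζ / (t l : ℂ)) • Emat) * TS t v (z + ζ) l k)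
        ≤ opNormC (TS t v z n k) +
            opNormC (∑ l ∈ Finset.Ico k n,
              TS t v z n (l + 1) * ((-ζ / (t l : ℂ)) • Emat) * TS t v (z + ζ) l k) :=
          opNormC_add_le _ _
      _ ≤ C + ∑ l ∈ Finset.Ico k n,
            opNormC (TS t v z n (l + 1) * ((-ζ / (t l : ℂ)) • Emat) *
              TS t v (z + ζ) l k) :=
          add_le_add (hC k n hk hkn' hnm) (opNormC_sum_le _ _)
      _ ≤ C + ∑ _l ∈ Finset.Ico k n, C * (D * ‖ζ‖) * B :=
          add_le_add_right (Finset.sum_le_sum hterm) C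
      _ = C + ((Finset.Ico k n).card : ℝ) * (C * (D * ‖ζ‖) * B) := by
          rw [Finset.sum_const, nsmul_eq_mul]
      _ ≤ C + (m : ℝ) * (C * (D * ‖ζ‖) * B) := by
          exact add_le_add_right (mul_le_mul_of_nonneg_right hcard hCDB) C
      _ = C + q * B := by rw [hqdef]; ring
      _ = B := by rw [hBdef]; field_simp; ring
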